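/- Let X₁, …, Xₙ be independent real-valued random variables with means μⱼ = E[Xⱼ], such that the centred variables Xⱼ − μⱼ have finite forward deviations σ_{f,j} and backward deviations σ_{b,j}. Let a ∈ ℝⁿ, b ∈ ℝ, ε ∈ (0,1), and set uⱼ := max(aⱼ·σ_{f,j}, −aⱼ·σ_{b,j}). If ⟨a, μ⟩ + √(−2·log ε) · ‖u‖₂ ≤ b, then Pr( ⟨a, X⟩ ≤ b ) ≥ 1 − ε. That is, the second-order cone constraint with safety factor √(−2 ln ε) is a safe approximation of the chance constraint at level ε. -/

import Mathlib

open MeasureTheory ProbabilityTheory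

/-- The set of candidate values whose supremum is the forward deviation
`σ_f(X) = sup_{θ>0} √(2 θ⁻² log E[exp(θX)])`. -/
def fwdDevSet {Ω : Type*} [MeasurableSpace Ω] (μ : Measure Ω) (X : Ω → ℝ) : Set ℝ :=
  {s : ℝ | ∃ θ : ℝ, 0 < θ ∧
    s = Real.sqrt (2 * θ⁻¹ ^ 2 * Real.log (∫ ω, Real.exp (θ * X ω) ∂μ))}

/-- The forward deviation of a random variable `X`:
`σ_f(X) = sup_{θ>0} √(2 θ⁻² log E[exp(θX)])`.  The backward deviation is `σ_b(X) = σ_f(−X)`. -/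
noncomputable def fwdDev {Ω : Type*} [MeasurableSpace Ω] (μ : Measure Ω) (X : Ω → ℝ) : ℝ :=
  sSup (fwdDevSet μ X)

lemma fwdDev_nonneg {Ω : Type*} [MeasurableSpace Ω] (μ : Measure Ω) (X : Ω → ℝ)
    (hbdd : BddAbove (fwdDevSet μ X)) : 0 ≤ fwdDev μ X :=
  le_trans (Real.sqrt_nonneg _) (le_csSup hbdd ⟨1, one_pos, rfl⟩)

lemma log_integral_exp_le {Ω : Type*} [MeasurableSpace Ω] (μ : Measure Ω) (X : Ω → ℝ)
    (hbdd : BddAbove (fwdDevSet μ X)) {θ : ℝ} (hθ : 0 < θ) :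
    Real.log (∫ ω, Real.exp (θ * X ω) ∂μ) ≤ θ ^ 2 * fwdDev μ X ^ 2 / 2 := by
  set L := Real.log (∫ ω, Real.exp (θ * X ω) ∂μ) with hLdef
  have hσ := fwdDev_nonneg μ X hbdd
  rcases le_or_gt L 0 with h | h
  · nlinarith [sq_nonneg θ, sq_nonneg (fwdDev μ X)]
  · have hle : Real.sqrt (2 * θ⁻¹ ^ 2 * L) ≤ fwdDev μ X := le_csSup hbdd ⟨θ, hθ, rfl⟩
    have hnn : 0 ≤ 2 * θ⁻¹ ^ 2 * L := by positivity
    have hsq : 2 * θ⁻¹ ^ 2 * L ≤ fwdDev μ X ^ 2 := by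
      have h1 := Real.sq_sqrt hnn
      nlinarith [Real.sqrt_nonneg (2 * θ⁻¹ ^ 2 * L)]
    have h4 := mul_le_mul_of_nonneg_left hsq (by positivity : (0:ℝ) ≤ θ ^ 2 / 2)
    have h5 : θ ^ 2 / 2 * (2 * θ⁻¹ ^ 2 * L) = L := by field_simp
    linarith

set_option maxHeartbeats 1600000 in
/-- For independent random variables `X₁,…,Xₙ` with means `mⱼ` whose centred versions have
finite forward deviations `σ_{f,j}` and backward deviations `σ_{b,j}`, and
`uⱼ = max(aⱼ σ_{f,j}, −aⱼ σ_{b,j})`: if `⟨a,m⟩ + √(−2 log ε)·‖u‖₂ ≤ b` then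
`Pr(⟨a,X⟩ ≤ b) ≥ 1 − ε`; the second-order cone constraint with safety factor `√(−2 ln ε)`
is a safe approximation of the chance constraint at level `ε`. -/
theorem stmt_6 {Ω : Type*} [MeasurableSpace Ω] (μ : Measure Ω) [IsProbabilityMeasure μ]
    (n : ℕ) (X : Fin n → Ω → ℝ) (hX : ∀ j, Measurable (X j))
    (hindep : iIndepFun X μ)
    (m : Fin n → ℝ) (hm : ∀ j, m j = ∫ ω, X j ω ∂μ)
    (hint : ∀ j, ∀ θ : ℝ, Integrable (fun ω => Real.exp (θ * (X j ω - m j))) μ)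
    (hfin_f : ∀ j, BddAbove (fwdDevSet μ (fun ω => X j ω - m j)))
    (hfin_b : ∀ j, BddAbove (fwdDevSet μ (fun ω => -(X j ω - m j))))
    (a : Fin n → ℝ) (b : ℝ) (ε : ℝ) (hε : ε ∈ Set.Ioo (0 : ℝ) 1)
    (u : Fin n → ℝ)
    (hu : ∀ j, u j = max (a j * fwdDev μ (fun ω => X j ω - m j))
                        (-a j * fwdDev μ (fun ω => -(X j ω - m j))))
    (hsoc : ∑ j, a j * m j + Real.sqrt (-2 * Real.log ε) * Real.sqrt (∑ j, u j ^ 2) ≤ b) :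
    ENNReal.ofReal (1 - ε) ≤ μ {ω | ∑ j, a j * X j ω ≤ b} := by
  obtain ⟨hε0, hε1⟩ := hε
  -- centred, scaled variables
  set Y : Fin n → Ω → ℝ := fun j ω => a j * (X j ω - m j) with hY
  have hYmeas : ∀ j, Measurable (Y j) := fun j => (((hX j).sub measurable_const).const_mul (a j))
  have hYindep : iIndepFun Y μ := by
    have := hindep.comp (fun j x => a j * (x - m j))
      (fun j => (measurable_id.sub measurable_const).const_mul (a j))
    exact this
  have hYint : ∀ j, ∀ θ : ℝ, Integrable (fun ω => Real.exp (θ * Y j ω)) μ := by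
    intro j θ
    have := hint j (θ * a j)
    simpa [hY, mul_assoc] using this
  -- nonnegativity of u
  have hu0 : ∀ j, 0 ≤ u j := by
    intro j
    rw [hu j]
    rcases le_or_gt 0 (a j) with h | h
    · exact le_max_of_le_left (mul_nonneg h (fwdDev_nonneg _ _ (hfin_f j)))
    · exact le_max_of_le_right (mul_nonneg (by linarith) (fwdDev_nonneg _ _ (hfin_b j)))
  -- key per-coordinate mgf bound
  have key : ∀ j, ∀ θ : ℝ, 0 ≤ θ → mgf (Y j) μ θ ≤ Real.exp (θ ^ 2 * u j ^ 2 / 2) := by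
    intro j θ hθ
    set c := θ * a j with hc
    have hmgf : mgf (Y j) μ θ = ∫ ω, Real.exp (c * (X j ω - m j)) ∂μ := by
      simp only [mgf, hY, hc, mul_assoc]
    have hpos : 0 < ∫ ω, Real.exp (c * (X j ω - m j)) ∂μ := by
      have := mgf_pos (μ := μ) (X := fun ω => X j ω - m j) (t := c) (hint j c)
      simpa [mgf] using this
    rcases lt_trichotomy c 0 with hc0 | hc0 | hc0
    · -- use backward deviation
      have hrw : (∫ ω, Real.exp (c * (X j ω - m j)) ∂μ)
          = ∫ ω, Real.exp ((-c) * (-(X j ω - m j))) ∂μ := by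
        congr 1; funext ω; ring_nf
      have hlog := log_integral_exp_le μ (fun ω => -(X j ω - m j)) (hfin_b j)
        (θ := -c) (by linarith)
      rw [← hrw] at hlog
      have hσb := fwdDev_nonneg μ (fun ω => -(X j ω - m j)) (hfin_b j)
      set σ := fwdDev μ (fun ω => -(X j ω - m j))
      have hbound : Real.log (∫ ω, Real.exp (c * (X j ω - m j)) ∂μ)
          ≤ θ ^ 2 * u j ^ 2 / 2 := by
        refine hlog.trans ?_
        have h1 : -a j * σ ≤ u j := by rw [hu j]; exact le_max_right _ _
        have hθpos : 0 < θ := lt_of_le_of_ne hθ (by rintro rfl; simp [hc] at hc0)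
        have ha : a j < 0 := by nlinarith
        have h2 : 0 ≤ -a j * σ := mul_nonneg (by linarith) hσb
        have h3 : (-a j * σ) ^ 2 ≤ u j ^ 2 := by nlinarith
        calc (-c) ^ 2 * σ ^ 2 / 2 = θ ^ 2 * (-a j * σ) ^ 2 / 2 := by ring
          _ ≤ θ ^ 2 * u j ^ 2 / 2 := by nlinarith [sq_nonneg θ]
      rw [hmgf, ← Real.exp_log hpos]
      exact Real.exp_le_exp.2 hbound
    · rw [hmgf]
      simp only [hc0, zero_mul, Real.exp_zero, integral_const, measure_univ, probReal_univ,
        ENNReal.toReal_one, smul_eq_mul, mul_one]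
      exact Real.one_le_exp (by positivity)
    · -- use forward deviation
      have hlog := log_integral_exp_le μ (fun ω => X j ω - m j) (hfin_f j) (θ := c) hc0
      have hσf := fwdDev_nonneg μ (fun ω => X j ω - m j) (hfin_f j)
      set σ := fwdDev μ (fun ω => X j ω - m j)
      have hbound : Real.log (∫ ω, Real.exp (c * (X j ω - m j)) ∂μ)
          ≤ θ ^ 2 * u j ^ 2 / 2 := by
        refine hlog.trans ?_
        have h1 : a j * σ ≤ u j := by rw [hu j]; exact le_max_left _ _
        have hθpos : 0 < θ := lt_of_le_of_ne hθ (by rintro rfl; simp [hc] at hc0)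
        have ha : 0 < a j := by nlinarith
        have h2 : 0 ≤ a j * σ := mul_nonneg ha.le hσf
        have h3 : (a j * σ) ^ 2 ≤ u j ^ 2 := by nlinarith
        calc c ^ 2 * σ ^ 2 / 2 = θ ^ 2 * (a j * σ) ^ 2 / 2 := by ring
          _ ≤ θ ^ 2 * u j ^ 2 / 2 := by nlinarith [sq_nonneg θ]
      rw [hmgf, ← Real.exp_log hpos]
      exact Real.exp_le_exp.2 hbound
  -- sum variable
  set S : Ω → ℝ := fun ω => ∑ j, Y j ω with hS
  have hSmeas : Measurable S := Finset.measurable_sum _ (fun j _ => hYmeas j)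
  have hSsum : S = ∑ j, Y j := by funext ω; simp [hS]
  have hSint : ∀ θ : ℝ, Integrable (fun ω => Real.exp (θ * S ω)) μ := by
    intro θ
    have := hYindep.integrable_exp_mul_sum (t := θ) hYmeas (s := Finset.univ)
      (fun j _ => hYint j θ)
    rw [hSsum]; exact this
  set v : ℝ := ∑ j, u j ^ 2 with hv
  have hv0 : 0 ≤ v := Finset.sum_nonneg fun j _ => sq_nonneg _
  have hmgfS : ∀ θ : ℝ, 0 ≤ θ → mgf S μ θ ≤ Real.exp (θ ^ 2 * v / 2) := by
    intro θ hθ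
    rw [hSsum, hYindep.mgf_sum hYmeas]
    calc ∏ j, mgf (Y j) μ θ ≤ ∏ j, Real.exp (θ ^ 2 * u j ^ 2 / 2) :=
          Finset.prod_le_prod (fun j _ => mgf_nonneg) (fun j _ => key j θ hθ)
      _ = Real.exp (∑ j, θ ^ 2 * u j ^ 2 / 2) := by rw [Real.exp_sum]
      _ = Real.exp (θ ^ 2 * v / 2) := by
          congr 1; rw [hv, Finset.mul_sum, ← Finset.sum_div]
  set t' : ℝ := b - ∑ j, a j * m j with ht'def
  have hlogε : Real.log ε < 0 := Real.log_neg hε0 hε1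
  set c : ℝ := -2 * Real.log ε with hcdef
  have hcpos : 0 < c := by simp only [hcdef]; linarith
  have ht' : Real.sqrt c * Real.sqrt v ≤ t' := by
    simp only [ht'def]; linarith [hsoc]
  -- rewrite the target set
  have hsetEq : {ω | ∑ j, a j * X j ω ≤ b} = {ω | t' < S ω}ᶜ := by
    ext ω
    have hSω : S ω = (∑ j, a j * X j ω) - ∑ j, a j * m j := by
      simp [hS, hY, mul_sub, Finset.sum_sub_distrib]
    simp only [Set.mem_setOf_eq, Set.mem_compl_iff, not_lt, hSω, ht'def]
    constructor <;> intro h <;> linarith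
  have hmeasset : MeasurableSet {ω | t' < S ω} := measurableSet_lt measurable_const hSmeas
  -- main tail bound
  have hbound : μ {ω | t' < S ω} ≤ ENNReal.ofReal ε := by
    rcases hv0.eq_or_lt with hveq | hvpos
    · -- all deviations vanish
      have ht'0 : 0 ≤ t' := by
        have : Real.sqrt v = 0 := by rw [← hveq, Real.sqrt_zero]
        rw [this, mul_zero] at ht'
        exact ht'
      have hunion : {ω | t' < S ω} = ⋃ k : ℕ, {ω | t' + ((k : ℝ) + 1)⁻¹ ≤ S ω} := by
        ext ω
        simp only [Set.mem_setOf_eq, Set.mem_iUnion]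
        constructor
        · intro h
          obtain ⟨k, hk⟩ := exists_nat_one_div_lt (show 0 < S ω - t' by linarith)
          exact ⟨k, by rw [one_div] at hk; linarith⟩
        · rintro ⟨k, hk⟩
          have : (0:ℝ) < ((k : ℝ) + 1)⁻¹ := by positivity
          linarith
      rw [hunion]
      have hnull : ∀ k : ℕ, μ {ω | t' + ((k : ℝ) + 1)⁻¹ ≤ S ω} = 0 := by
        intro k
        set δ : ℝ := ((k : ℝ) + 1)⁻¹ with hδdef
        have hδ : 0 < δ := by positivity
        have hb2 : ∀ θ : ℝ, 0 ≤ θ →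
            (μ {ω | t' + δ ≤ S ω}).toReal ≤ Real.exp (-θ * (t' + δ)) := by
          intro θ hθ
          have h1 := measure_ge_le_exp_mul_mgf (μ := μ) (X := S) (t := θ) (t' + δ) hθ (hSint θ)
          have h2 := hmgfS θ hθ
          have h3 : Real.exp (θ ^ 2 * v / 2) = 1 := by rw [← hveq]; norm_num
          calc (μ {ω | t' + δ ≤ S ω}).toReal
              ≤ Real.exp (-θ * (t' + δ)) * mgf S μ θ := h1
            _ ≤ Real.exp (-θ * (t' + δ)) * Real.exp (θ ^ 2 * v / 2) := by
                exact mul_le_mul_of_nonneg_left h2 (Real.exp_pos _).le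
            _ = Real.exp (-θ * (t' + δ)) := by rw [h3, mul_one]
        have htend : Filter.Tendsto (fun θ : ℝ => Real.exp (-θ * (t' + δ)))
            Filter.atTop (nhds 0) := by
          have h2 : Filter.Tendsto (fun θ : ℝ => θ * (t' + δ)) Filter.atTop Filter.atTop :=
            Filter.tendsto_id.atTop_mul_const (by linarith)
          have h3 : Filter.Tendsto (fun θ : ℝ => -(θ * (t' + δ))) Filter.atTop Filter.atBot :=
            Filter.tendsto_neg_atBot_iff.mpr h2
          have h4 : Filter.Tendsto (fun θ : ℝ => Real.exp (-(θ * (t' + δ))))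
              Filter.atTop (nhds 0) := Real.tendsto_exp_atBot.comp h3
          simpa [neg_mul] using h4
        have hto : (μ {ω | t' + δ ≤ S ω}).toReal ≤ 0 :=
          ge_of_tendsto htend (Filter.eventually_atTop.2 ⟨0, fun θ hθ => hb2 θ hθ⟩)
        have heq0 : (μ {ω | t' + δ ≤ S ω}).toReal = 0 :=
          le_antisymm hto ENNReal.toReal_nonneg
        exact ((ENNReal.toReal_eq_zero_iff _).1 heq0).resolve_right (measure_ne_top μ _)
      rw [measure_iUnion_null hnull]
      exact zero_le
    · -- positive variance proxy: Chernoff with optimal θ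
      have hsv : 0 < Real.sqrt v := Real.sqrt_pos.2 hvpos
      have hsc : 0 < Real.sqrt c := Real.sqrt_pos.2 hcpos
      have ht'pos : 0 < t' := lt_of_lt_of_le (mul_pos hsc hsv) ht'
      set θ : ℝ := t' / v with hθdef
      have hθ0 : 0 ≤ θ := by positivity
      have hsq : c * v ≤ t' ^ 2 := by
        have h1 : Real.sqrt (c * v) ≤ t' := by rw [Real.sqrt_mul hcpos.le]; exact ht'
        have h2 := Real.sq_sqrt (mul_nonneg hcpos.le hv0)
        nlinarith [Real.sqrt_nonneg (c * v)]
      have hts : (μ {ω | t' ≤ S ω}).toReal ≤ ε := by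
        have h1 := measure_ge_le_exp_mul_mgf (μ := μ) (X := S) (t := θ) t' hθ0 (hSint θ)
        have h2 := hmgfS θ hθ0
        have h3 : Real.exp (-θ * t') * Real.exp (θ ^ 2 * v / 2)
            = Real.exp (-t' ^ 2 / (2 * v)) := by
          rw [← Real.exp_add]
          congr 1
          rw [hθdef]
          field_simp
          ring
        have h4 : Real.exp (-t' ^ 2 / (2 * v)) ≤ ε := by
          rw [← Real.exp_log hε0]
          apply Real.exp_le_exp.2
          rw [div_le_iff₀ (by positivity)]
          have h5 : Real.log ε * (2 * v) = -(c * v) := by rw [hcdef]; ring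
          linarith
        calc (μ {ω | t' ≤ S ω}).toReal
            ≤ Real.exp (-θ * t') * mgf S μ θ := h1
          _ ≤ Real.exp (-θ * t') * Real.exp (θ ^ 2 * v / 2) :=
              mul_le_mul_of_nonneg_left h2 (Real.exp_pos _).le
          _ = Real.exp (-t' ^ 2 / (2 * v)) := h3
          _ ≤ ε := h4
      have hsub : μ {ω | t' < S ω} ≤ μ {ω | t' ≤ S ω} :=
        measure_mono (Set.setOf_subset_setOf.2 fun ω h => h.le)
      calc μ {ω | t' < S ω} ≤ μ {ω | t' ≤ S ω} := hsub
        _ = ENNReal.ofReal (μ {ω | t' ≤ S ω}).toReal :=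
            (ENNReal.ofReal_toReal (measure_ne_top μ _)).symm
        _ ≤ ENNReal.ofReal ε := ENNReal.ofReal_le_ofReal hts
  rw [hsetEq, prob_compl_eq_one_sub hmeasset]
  have hre : ENNReal.ofReal (1 - ε) = 1 - ENNReal.ofReal ε := by
    rw [ENNReal.ofReal_sub _ hε0.le, ENNReal.ofReal_one]
  rw [hre]
  exact tsub_le_tsub_left hbound 1
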